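/- Let σ(x) = 1/(1+e^{−x}) be the sigmoid function, let α ∈ (1/2, 1], and define f(x) = (2σ(x) − 1)·(2α − 1). Then for any B ≥ 0 and any x, x′ ∈ [−B, B], |x − x′| ≤ ((e^{−B} + 2 + e^{B}) / (2·(2α − 1))) · |f(x) − f(x′)|. -/

import Mathlib

noncomputable def sigmoid (x : ℝ) : ℝ := 1 / (1 + Real.exp (-x))

lemma sigmoid_hasDerivAt (y : ℝ) :
    HasDerivAt sigmoid (Real.exp (-y) / (1 + Real.exp (-y)) ^ 2) y := by
  have h1 : HasDerivAt (fun y : ℝ => 1 + Real.exp (-y)) (-Real.exp (-y)) y := by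
    have := ((Real.hasDerivAt_exp (-y)).comp y (hasDerivAt_neg y)).const_add 1
    simpa using this
  have hne : (1 : ℝ) + Real.exp (-y) ≠ 0 := by positivity
  have := h1.inv hne
  have heq : sigmoid = fun y : ℝ => (1 + Real.exp (-y))⁻¹ := by
    funext z; simp [sigmoid, one_div]
  rw [heq]
  exact (by simpa [neg_neg] using this : HasDerivAt (fun y : ℝ => 1 + Real.exp (-y))⁻¹ (Real.exp (-y) / (1 + Real.exp (-y)) ^ 2) y)

lemma key_lemma (B : ℝ) (x x' : ℝ) (hx : x ∈ Set.Icc (-B) B) (hx' : x' ∈ Set.Icc (-B) B)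
    (h : x' ≤ x) :
    x - x' ≤ (Real.exp (-B) + 2 + Real.exp B) * (sigmoid x - sigmoid x') := by
  set D : ℝ := Real.exp (-B) + 2 + Real.exp B with hD
  have hDpos : 0 < D := by positivity
  set c : ℝ := D⁻¹ with hc
  have hd : ∀ y : ℝ, HasDerivAt (fun y => sigmoid y - c * y)
      (Real.exp (-y) / (1 + Real.exp (-y)) ^ 2 - c) y := by
    intro y
    have h2 : HasDerivAt (fun y : ℝ => c * y) c y := by
      simpa using (hasDerivAt_id y).const_mul c
    exact (sigmoid_hasDerivAt y).sub h2
  have hmono : MonotoneOn (fun y => sigmoid y - c * y) (Set.Icc (-B) B) := by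
    apply monotoneOn_of_deriv_nonneg (convex_Icc _ _)
    · exact Continuous.continuousOn (by
        have : Continuous sigmoid := by
          apply Continuous.div continuous_const
          · continuity
          · intro z; positivity
        fun_prop)
    · intro y hy
      exact ((hd y).differentiableAt).differentiableWithinAt
    · intro y hy
      rw [interior_Icc] at hy
      rw [(hd y).deriv]
      have hyB : -B < y ∧ y < B := ⟨hy.1, hy.2⟩
      have he1 : Real.exp y ≤ Real.exp B := Real.exp_le_exp.mpr hyB.2.le
      have he2 : Real.exp (-B - y) ≤ 1 := by
        rw [Real.exp_le_one_iff]; linarith [hyB.1]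
      have hsum : Real.exp y + Real.exp (-y) ≤ Real.exp B + Real.exp (-B) := by
        have hfac : (Real.exp B - Real.exp y) * (1 - Real.exp (-B - y)) ≥ 0 :=
          mul_nonneg (by linarith) (by linarith)
        have h1 : Real.exp B * Real.exp (-B - y) = Real.exp (-y) := by
          rw [← Real.exp_add]; ring_nf
        have h2 : Real.exp y * Real.exp (-B - y) = Real.exp (-B) := by
          rw [← Real.exp_add]; ring_nf
        nlinarith [hfac]
      have hsq : (1 + Real.exp (-y)) ^ 2 = Real.exp (-y) * (Real.exp y + 2 + Real.exp (-y)) := by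
        have : Real.exp (-y) * Real.exp y = 1 := by
          rw [← Real.exp_add]; simp
        ring_nf
        nlinarith [this]
      have hepos : 0 < Real.exp (-y) := Real.exp_pos _
      have hDpos' : 0 < Real.exp y + 2 + Real.exp (-y) := by positivity
      have hval : Real.exp (-y) / (1 + Real.exp (-y)) ^ 2
          = (Real.exp y + 2 + Real.exp (-y))⁻¹ := by
        rw [hsq]
        field_simp
      rw [hval, hc, sub_nonneg]
      apply inv_anti₀ hDpos'
      rw [hD]; linarith
  have := hmono hx' hx h
  simp only [sub_le_sub_iff] at this
  have hcd : c * D = 1 := inv_mul_cancel₀ hDpos.ne'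
  nlinarith [this]

theorem stmt_3 (α : ℝ) (hα : α ∈ Set.Ioc (1/2 : ℝ) 1)
    (f : ℝ → ℝ) (hf : ∀ x, f x = (2 * sigmoid x - 1) * (2 * α - 1))
    (B : ℝ) (hB : 0 ≤ B) (x x' : ℝ) (hx : x ∈ Set.Icc (-B) B) (hx' : x' ∈ Set.Icc (-B) B) :
    |x - x'| ≤ (Real.exp (-B) + 2 + Real.exp B) / (2 * (2 * α - 1)) * |f x - f x'| := by
  have hα1 : 0 < 2 * α - 1 := by
    have := hα.1; linarith
  set D : ℝ := Real.exp (-B) + 2 + Real.exp B with hD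
  have hDpos : 0 < D := by positivity
  have hfx : f x - f x' = 2 * (2 * α - 1) * (sigmoid x - sigmoid x') := by
    rw [hf, hf]; ring
  have habs : |f x - f x'| = 2 * (2 * α - 1) * |sigmoid x - sigmoid x'| := by
    rw [hfx, abs_mul, abs_of_pos (by linarith : (0:ℝ) < 2 * (2 * α - 1))]
  have hkey : |x - x'| ≤ D * |sigmoid x - sigmoid x'| := by
    rcases le_total x' x with h | h
    · have := key_lemma B x x' hx hx' h
      have hσ : sigmoid x' ≤ sigmoid x := by nlinarith
      rw [abs_of_nonneg (by linarith), abs_of_nonneg (by linarith)]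
      exact this
    · have := key_lemma B x' x hx' hx h
      have hσ : sigmoid x ≤ sigmoid x' := by nlinarith
      rw [abs_of_nonpos (by linarith), abs_of_nonpos (by linarith), hD]
      linarith
  rw [habs]
  rw [div_mul_eq_mul_div, mul_comm (2 * (2 * α - 1)), ← mul_assoc,
    mul_div_assoc, div_self (by linarith : 2 * (2 * α - 1) ≠ 0), mul_one]
  exact hkey
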